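/- (Lemma 2.2) Let n ≥ 1, γ ∈ ℝ, let U ⊆ ℝⁿ be open, and let v : ℝⁿ → ℝ be three times continuously differentiable and strictly positive on U. Then at every point of U: 2·v^γ·S₂(D²v) = div( (γ/2)·v^{γ−1}·|Dv|²·Dv + v^γ·S²_{ij}(D²v)·∂_i v ) − (3/2)·γ·v^{γ−1}·|Dv|²·Δv − (γ(γ−1)/2)·v^{γ−2}·|Dv|⁴, where the j-th component of the vector field inside the divergence is (γ/2)·v^{γ−1}·|Dv|²·v_j + v^γ·∑_i S²_{ij}(D²v)·v_i. -/

import Mathlib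

/-- Partial derivative `∂_i f` of a function on `ℝⁿ`. -/
noncomputable def pd {n : ℕ} (i : Fin n) (f : (Fin n → ℝ) → ℝ) (x : Fin n → ℝ) : ℝ :=
  fderiv ℝ f x (Pi.single i 1)

/-- Laplacian `Δf = ∑ᵢ ∂ᵢᵢ f`. -/
noncomputable def lap {n : ℕ} (f : (Fin n → ℝ) → ℝ) (x : Fin n → ℝ) : ℝ :=
  ∑ i, pd i (pd i f) x

/-- `S²_{ij}(D²v) = (Δv)·δ_{ij} − ∂_{ij}v`. -/
noncomputable def S2ij {n : ℕ} (v : (Fin n → ℝ) → ℝ) (i j : Fin n) (x : Fin n → ℝ) : ℝ :=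
  lap v x * (if i = j then 1 else 0) - pd j (pd i v) x

/-- `S₂(D²v) = ((Δv)² − ∑_{i,j} v_{ij}²)/2`. -/
noncomputable def S2H {n : ℕ} (v : (Fin n → ℝ) → ℝ) (x : Fin n → ℝ) : ℝ :=
  ((lap v x) ^ 2 - ∑ i, ∑ j, (pd j (pd i v) x) ^ 2) / 2

/-- `|Df|² = ∑ᵢ (∂ᵢf)²`. -/
noncomputable def gradSq {n : ℕ} (f : (Fin n → ℝ) → ℝ) (x : Fin n → ℝ) : ℝ :=
  ∑ i, (pd i f x) ^ 2

open Filter Topology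

section Aux
variable {n : ℕ} {f g : (Fin n → ℝ) → ℝ} {x : Fin n → ℝ} {j : Fin n}

lemma contDiffAt_pd {m : ℕ∞} (i : Fin n) (hf : ContDiffAt ℝ (m + 1) f x) :
    ContDiffAt ℝ m (pd i f) x :=
  (hf.fderiv_right le_rfl).clm_apply contDiffAt_const

lemma pd_add (hf : DifferentiableAt ℝ f x) (hg : DifferentiableAt ℝ g x) :
    pd j (fun y => f y + g y) x = pd j f x + pd j g x := by
  simp [pd, fderiv_fun_add hf hg]

lemma pd_sub (hf : DifferentiableAt ℝ f x) (hg : DifferentiableAt ℝ g x) :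
    pd j (fun y => f y - g y) x = pd j f x - pd j g x := by
  simp [pd, fderiv_fun_sub hf hg]

lemma pd_mul (hf : DifferentiableAt ℝ f x) (hg : DifferentiableAt ℝ g x) :
    pd j (fun y => f y * g y) x = pd j f x * g x + f x * pd j g x := by
  simp [pd, fderiv_fun_mul hf hg]; ring

lemma pd_const_mul (hf : DifferentiableAt ℝ f x) (c : ℝ) :
    pd j (fun y => c * f y) x = c * pd j f x := by
  simp [pd, fderiv_const_mul hf c]

lemma pd_mul_const (hf : DifferentiableAt ℝ f x) (c : ℝ) :
    pd j (fun y => f y * c) x = pd j f x * c := by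
  have h : (fun y => f y * c) = fun y => c * f y := by ext y; ring
  rw [h, pd_const_mul hf c, mul_comm]

lemma pd_sum {ι : Type*} (s : Finset ι) (A : ι → (Fin n → ℝ) → ℝ)
    (h : ∀ i ∈ s, DifferentiableAt ℝ (A i) x) :
    pd j (fun y => ∑ i ∈ s, A i y) x = ∑ i ∈ s, pd j (A i) x := by
  simp [pd, fderiv_fun_sum h]

lemma pd_rpow {p : ℝ} (hf : DifferentiableAt ℝ f x) (h : f x ≠ 0) :
    pd j (fun y => f y ^ p) x = p * f x ^ (p - 1) * pd j f x := by
  rw [pd, (hf.hasFDerivAt.rpow_const (Or.inl h)).fderiv]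
  simp [pd, mul_assoc]

lemma pd_sq (hf : DifferentiableAt ℝ f x) :
    pd j (fun y => f y ^ 2) x = 2 * f x * pd j f x := by
  have : (fun y => f y ^ 2) = fun y => f y * f y := by ext y; ring
  rw [this, pd_mul hf hf]; ring

end Aux

section Key
variable {n : ℕ} {v : (Fin n → ℝ) → ℝ} {x : Fin n → ℝ}

lemma key (γ : ℝ) (hv : ContDiffAt ℝ 3 v x) (hvx : v x ≠ 0) (j : Fin n) :
    pd j (fun y =>
        (γ / 2) * v y ^ (γ - 1) * gradSq v y * pd j v y
          + v y ^ γ * ∑ i, S2ij v i j y * pd i v y) x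
    = γ * (γ - 1) / 2 * v x ^ (γ - 2) * gradSq v x * (pd j v x) ^ 2
      + γ / 2 * v x ^ (γ - 1) * pd j v x * (∑ i, 2 * pd i v x * pd j (pd i v) x)
      + γ / 2 * v x ^ (γ - 1) * gradSq v x * pd j (pd j v) x
      + γ * v x ^ (γ - 1) * pd j v x * (∑ i, S2ij v i j x * pd i v x)
      + v x ^ γ * (∑ i,
          (((if i = j then (1:ℝ) else 0) * (∑ k, pd j (pd k (pd k v)) x)
              - pd j (pd j (pd i v)) x) * pd i v x
            + S2ij v i j x * pd j (pd i v) x)) := by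
  have hd0 : DifferentiableAt ℝ v x := hv.differentiableAt (by norm_num)
  have hC2 : ContDiffAt ℝ 2 v x := hv.of_le (by norm_num)
  have hd1 : ∀ i : Fin n, DifferentiableAt ℝ (pd i v) x := fun i =>
    (contDiffAt_pd (m := 1) i (by exact_mod_cast hC2)).differentiableAt (by norm_num)
  have hC2pd : ∀ i : Fin n, ContDiffAt ℝ 2 (pd i v) x := fun i =>
    contDiffAt_pd (m := 2) i (by exact_mod_cast hv)
  have hd2 : ∀ i k : Fin n, DifferentiableAt ℝ (pd k (pd i v)) x := fun i k =>
    (contDiffAt_pd (m := 1) k (by exact_mod_cast hC2pd i)).differentiableAt (by norm_num)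
  have hGeq : gradSq v = fun y => ∑ i, (pd i v y) ^ 2 := rfl
  have hLeq : lap v = fun y => ∑ k, pd k (pd k v) y := rfl
  have hdG : DifferentiableAt ℝ (gradSq v) x := by
    rw [hGeq]; exact DifferentiableAt.fun_sum fun i _ => (hd1 i).pow 2
  have hdL : DifferentiableAt ℝ (lap v) x := by
    rw [hLeq]; exact DifferentiableAt.fun_sum fun k _ => hd2 k k
  have hdS2 : ∀ i k : Fin n, DifferentiableAt ℝ (S2ij v i k) x := fun i k =>
    (hdL.mul_const _).sub (hd2 i k)
  have hrp1 : DifferentiableAt ℝ (fun y => v y ^ (γ - 1)) x := hd0.rpow_const (Or.inl hvx)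
  have hrpγ : DifferentiableAt ℝ (fun y => v y ^ γ) x := hd0.rpow_const (Or.inl hvx)
  have h1 : DifferentiableAt ℝ (fun y => γ / 2 * v y ^ (γ - 1)) x :=
    (differentiableAt_const _).mul hrp1
  have h2 : DifferentiableAt ℝ (fun y => γ / 2 * v y ^ (γ - 1) * gradSq v y) x := h1.mul hdG
  have h3 : DifferentiableAt ℝ (fun y => γ / 2 * v y ^ (γ - 1) * gradSq v y * pd j v y) x :=
    h2.mul (hd1 j)
  have hSum : DifferentiableAt ℝ (fun y => ∑ i, S2ij v i j y * pd i v y) x :=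
    DifferentiableAt.fun_sum fun i _ => (hdS2 i j).mul (hd1 i)
  have h4 : DifferentiableAt ℝ (fun y => v y ^ γ * ∑ i, S2ij v i j y * pd i v y) x :=
    hrpγ.mul hSum
  -- compute pd of gradSq
  have pdG : pd j (gradSq v) x = ∑ i, 2 * pd i v x * pd j (pd i v) x := by
    rw [hGeq, pd_sum _ (fun i => fun y => (pd i v y) ^ 2) (fun i _ => (hd1 i).pow 2)]
    exact Finset.sum_congr rfl fun i _ => pd_sq (hd1 i)
  have pdL : pd j (lap v) x = ∑ k, pd j (pd k (pd k v)) x := by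
    rw [hLeq, pd_sum _ (fun k => fun y => pd k (pd k v) y) (fun k _ => hd2 k k)]
  have pdS2 : ∀ i : Fin n, pd j (S2ij v i j) x
      = (if i = j then (1:ℝ) else 0) * (∑ k, pd j (pd k (pd k v)) x)
        - pd j (pd j (pd i v)) x := by
    intro i
    have hS2eq : S2ij v i j
        = fun y => lap v y * (if i = j then (1:ℝ) else 0) - pd j (pd i v) y := rfl
    rw [hS2eq, pd_sub (hdL.mul_const _) (hd2 i j), pd_mul_const hdL _, pdL]
    ring
  -- main computation
  rw [pd_add h3 h4, pd_mul h2 (hd1 j), pd_mul h1 hdG, pd_const_mul hrp1,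
    pd_rpow hd0 hvx, pd_mul hrpγ hSum, pd_rpow hd0 hvx,
    pd_sum _ (fun i => fun y => S2ij v i j y * pd i v y) (fun i _ => (hdS2 i j).mul (hd1 i))]
  have hsum1 : (∑ i, pd j (fun y => S2ij v i j y * pd i v y) x)
      = ∑ i, (((if i = j then (1:ℝ) else 0) * (∑ k, pd j (pd k (pd k v)) x)
              - pd j (pd j (pd i v)) x) * pd i v x
            + S2ij v i j x * pd j (pd i v) x) := by
    refine Finset.sum_congr rfl fun i _ => ?_
    rw [pd_mul (hdS2 i j) (hd1 i), pdS2 i]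
  rw [hsum1, pdG]
  have hpow : γ - 1 - 1 = γ - 2 := by ring
  rw [hpow]
  ring
end Key

section Sym
variable {n : ℕ} {f v : (Fin n → ℝ) → ℝ} {x : Fin n → ℝ}

lemma pd_pd_eq_fderiv (hf : ContDiffAt ℝ 2 f x) (a b : Fin n) :
    pd a (pd b f) x = fderiv ℝ (fderiv ℝ f) x (Pi.single a 1) (Pi.single b 1) := by
  have hdf : DifferentiableAt ℝ (fderiv ℝ f) x :=
    (hf.fderiv_right (m := 1) le_rfl).differentiableAt (by norm_num)
  have h : pd a (pd b f) x
      = fderiv ℝ (fun y => fderiv ℝ f y (Pi.single b 1)) x (Pi.single a 1) := rfl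
  rw [h, fderiv_clm_apply hdf (differentiableAt_const _)]
  simp

lemma pd_comm (hf : ContDiffAt ℝ 2 f x) (a b : Fin n) :
    pd a (pd b f) x = pd b (pd a f) x := by
  rw [pd_pd_eq_fderiv hf, pd_pd_eq_fderiv hf]
  exact hf.isSymmSndFDerivAt (by simp [minSmoothness_of_isRCLikeNormedField]) _ _

lemma pd_congr_nhds {g : (Fin n → ℝ) → ℝ} {j : Fin n} (h : f =ᶠ[nhds x] g) :
    pd j f x = pd j g x := by
  simp [pd, h.fderiv_eq]

lemma third_sym {U : Set (Fin n → ℝ)} (hU : IsOpen U) (hv : ContDiffOn ℝ 3 v U)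
    (hx : x ∈ U) (i : Fin n) :
    ∑ k, pd i (pd k (pd k v)) x = ∑ k, pd k (pd k (pd i v)) x := by
  have hCA : ∀ y ∈ U, ContDiffAt ℝ 3 v y := fun y hy => (hv y hy).contDiffAt (hU.mem_nhds hy)
  refine Finset.sum_congr rfl fun k _ => ?_
  have h1 : pd i (pd k (pd k v)) x = pd k (pd i (pd k v)) x := by
    have h2 : ContDiffAt ℝ 2 (pd k v) x := by
      have := contDiffAt_pd (m := 2) k (by exact_mod_cast hCA x hx)
      exact this
    exact pd_comm h2 i k
  rw [h1]
  refine pd_congr_nhds (Filter.eventuallyEq_of_mem (hU.mem_nhds hx) fun y hy => ?_)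
  exact pd_comm ((hCA y hy).of_le (by norm_num)) i k

end Sym



/-- Lemma 2.2 (identityC):
`2·v^γ·S₂(D²v) = div((γ/2)·v^{γ−1}·|Dv|²·Dv + v^γ·S²_{ij}(D²v)·∂ᵢv)
  − (3/2)·γ·v^{γ−1}·|Dv|²·Δv − (γ(γ−1)/2)·v^{γ−2}·|Dv|⁴` on `U`. -/
theorem stmt_6 (n : ℕ) (hn : 1 ≤ n) (γ : ℝ) (U : Set (Fin n → ℝ)) (hU : IsOpen U)
    (v : (Fin n → ℝ) → ℝ) (hv : ContDiffOn ℝ 3 v U) (hpos : ∀ x ∈ U, 0 < v x)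
    (x : Fin n → ℝ) (hx : x ∈ U) :
    2 * v x ^ γ * S2H v x
      = (∑ j, pd j (fun y =>
            (γ / 2) * v y ^ (γ - 1) * gradSq v y * pd j v y
              + v y ^ γ * ∑ i, S2ij v i j y * pd i v y) x)
        - (3 / 2) * γ * v x ^ (γ - 1) * gradSq v x * lap v x
        - (γ * (γ - 1) / 2) * v x ^ (γ - 2) * (gradSq v x) ^ 2 := by
  have hvx3 : ContDiffAt ℝ 3 v x := (hv x hx).contDiffAt (hU.mem_nhds hx)
  have hvxne : v x ≠ 0 := (hpos x hx).ne'
  rw [Finset.sum_congr rfl fun j _ => key γ hvx3 hvxne j]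
  rw [Finset.sum_add_distrib, Finset.sum_add_distrib, Finset.sum_add_distrib,
    Finset.sum_add_distrib]
  have e1 : ∑ j, γ * (γ - 1) / 2 * v x ^ (γ - 2) * gradSq v x * (pd j v x) ^ 2
      = γ * (γ - 1) / 2 * v x ^ (γ - 2) * gradSq v x * gradSq v x := by
    rw [← Finset.mul_sum]
    rfl
  have e2 : ∑ j, γ / 2 * v x ^ (γ - 1) * pd j v x * (∑ i, 2 * pd i v x * pd j (pd i v) x)
      = γ * v x ^ (γ - 1) * ∑ j, ∑ i, pd i v x * pd j v x * pd j (pd i v) x := by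
    rw [Finset.mul_sum]
    refine Finset.sum_congr rfl fun j _ => ?_
    rw [Finset.mul_sum, Finset.mul_sum]
    refine Finset.sum_congr rfl fun i _ => ?_
    ring
  have e3 : ∑ j, γ / 2 * v x ^ (γ - 1) * gradSq v x * pd j (pd j v) x
      = γ / 2 * v x ^ (γ - 1) * gradSq v x * lap v x := by
    rw [← Finset.mul_sum]
    rfl
  have e4 : ∑ j, γ * v x ^ (γ - 1) * pd j v x * (∑ i, S2ij v i j x * pd i v x)
      = γ * v x ^ (γ - 1) * (lap v x * gradSq v x)
        - γ * v x ^ (γ - 1) * ∑ j, ∑ i, pd i v x * pd j v x * pd j (pd i v) x := by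
    have hin : ∀ j : Fin n, ∑ i, S2ij v i j x * pd i v x
        = lap v x * pd j v x - ∑ i, pd j (pd i v) x * pd i v x := by
      intro j
      simp only [S2ij, sub_mul, mul_ite, ite_mul, mul_one, mul_zero, one_mul, zero_mul,
        Finset.sum_sub_distrib, Finset.sum_ite_eq', Finset.mem_univ, if_true]
    have hgs : ∑ j, pd j v x * pd j v x = gradSq v x := by
      rw [show gradSq v x = ∑ j, (pd j v x) ^ 2 from rfl]
      exact Finset.sum_congr rfl fun j _ => by ring
    calc ∑ j, γ * v x ^ (γ - 1) * pd j v x * (∑ i, S2ij v i j x * pd i v x)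
        = ∑ j, (γ * v x ^ (γ - 1) * (lap v x * (pd j v x * pd j v x))
            - γ * v x ^ (γ - 1) * ∑ i, pd i v x * pd j v x * pd j (pd i v) x) := by
          refine Finset.sum_congr rfl fun j _ => ?_
          have hS : pd j v x * ∑ i, pd j (pd i v) x * pd i v x
              = ∑ i, pd i v x * pd j v x * pd j (pd i v) x := by
            rw [Finset.mul_sum]
            exact Finset.sum_congr rfl fun i _ => by ring
          rw [hin j, ← hS]
          ring
      _ = γ * v x ^ (γ - 1) * (lap v x * gradSq v x)
            - γ * v x ^ (γ - 1) * ∑ j, ∑ i, pd i v x * pd j v x * pd j (pd i v) x := by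
          rw [Finset.sum_sub_distrib, ← Finset.mul_sum, ← Finset.mul_sum, ← Finset.mul_sum, hgs]
  have e5 : ∑ j, v x ^ γ * (∑ i,
          (((if i = j then (1:ℝ) else 0) * (∑ k, pd j (pd k (pd k v)) x)
              - pd j (pd j (pd i v)) x) * pd i v x
            + S2ij v i j x * pd j (pd i v) x))
      = v x ^ γ * (lap v x * lap v x - ∑ i, ∑ j, (pd j (pd i v) x) ^ 2) := by
    rw [← Finset.mul_sum]
    congr 1
    have inner : ∀ j : Fin n, (∑ i,
          (((if i = j then (1:ℝ) else 0) * (∑ k, pd j (pd k (pd k v)) x)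
              - pd j (pd j (pd i v)) x) * pd i v x
            + S2ij v i j x * pd j (pd i v) x))
        = ((∑ k, pd j (pd k (pd k v)) x) * pd j v x
            - ∑ i, pd j (pd j (pd i v)) x * pd i v x)
          + (lap v x * pd j (pd j v) x - ∑ i, pd j (pd i v) x * pd j (pd i v) x) := by
      intro j
      simp only [S2ij, sub_mul, mul_ite, ite_mul, mul_one, mul_zero, one_mul, zero_mul,
        Finset.sum_add_distrib, Finset.sum_sub_distrib, Finset.sum_ite_eq', Finset.mem_univ,
        if_true]
    rw [Finset.sum_congr rfl fun j _ => inner j]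
    rw [Finset.sum_add_distrib, Finset.sum_sub_distrib, Finset.sum_sub_distrib]
    have z1 : ∑ j, (∑ k, pd j (pd k (pd k v)) x) * pd j v x
        = ∑ j, ∑ i, pd j (pd j (pd i v) ) x * pd i v x := by
      calc ∑ j, (∑ k, pd j (pd k (pd k v)) x) * pd j v x
          = ∑ j, ∑ k, pd k (pd k (pd j v)) x * pd j v x :=
            Finset.sum_congr rfl fun j _ => by rw [third_sym hU hv hx j, Finset.sum_mul]
        _ = ∑ j, ∑ i, pd j (pd j (pd i v)) x * pd i v x := Finset.sum_comm
    have z2 : ∑ j, lap v x * pd j (pd j v) x = lap v x * lap v x := by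
      rw [← Finset.mul_sum]; rfl
    have z3 : ∑ j, ∑ i, pd j (pd i v) x * pd j (pd i v) x
        = ∑ i, ∑ j, (pd j (pd i v) x) ^ 2 := by
      rw [Finset.sum_comm]
      exact Finset.sum_congr rfl fun i _ => Finset.sum_congr rfl fun j _ => (sq _).symm
    rw [z1, z2, z3]
    ring
  rw [e1, e2, e3, e4, e5]
  have hS2H : S2H v x = (lap v x * lap v x - ∑ i, ∑ j, (pd j (pd i v) x) ^ 2) / 2 := by
    rw [S2H]; ring
  rw [hS2H]
  ring
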